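/- With X, f, τ, W as above, W is differentiable at t₀ > 0 if and only if ∫_{{x ∈ X : f(x) = t₀}} τ(x, t₀) dx = 0. -/

import Mathlib

open MeasureTheory Filter Topology

private lemma abs_min_sub_min (a b c : ℝ) : |min a c - min b c| ≤ |a - b| := by
  rcases le_total a c with h1 | h1 <;> rcases le_total b c with h2 | h2 <;>
    simp [min_eq_left, min_eq_right, h1, h2, abs_sub_comm] <;>
    rw [abs_le] <;>
    constructor <;>
    nlinarith [le_abs_self (a - b), neg_abs_le (a - b), le_abs_self (b - a), neg_abs_le (b - a)]

/-- `W` is differentiable at `t₀ > 0` iff the integral of `τ(·, t₀)` over the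
level set `{x ∈ X | f x = t₀}` vanishes. -/
theorem differentiable_iff_level_integral_zero (n : ℕ)
    (X : Set (EuclideanSpace ℝ (Fin n))) (hX : IsCompact X)
    (f : EuclideanSpace ℝ (Fin n) → ℝ) (hf : ContinuousOn f X)
    (hf0 : ∀ x ∈ X, 0 ≤ f x)
    (τ : EuclideanSpace ℝ (Fin n) → ℝ → ℝ)
    (hτ : ContinuousOn (fun q : EuclideanSpace ℝ (Fin n) × ℝ => τ q.1 q.2)
      {q | q.1 ∈ X ∧ 0 ≤ q.2 ∧ q.2 ≤ f q.1})
    (W : ℝ → ℝ)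
    (hW : ∀ t, W t = ∫ x in X, ∫ s in (0:ℝ)..(min t (f x)), τ x s)
    (t₀ : ℝ) (ht₀ : 0 < t₀) :
    DifferentiableAt ℝ W t₀ ↔ (∫ x in {x ∈ X | f x = t₀}, τ x t₀) = 0 := by
  classical
  have hXc : IsClosed X := hX.isClosed
  -- extend f to a continuous F on all of the space
  obtain ⟨F, hFf⟩ : ∃ F : C(EuclideanSpace ℝ (Fin n), ℝ), ∀ x ∈ X, F x = f x := by
    obtain ⟨g, hg⟩ := ContinuousMap.exists_restrict_eq (Y := ℝ) hXc (ContinuousMap.mk (X.restrict f) hf.restrict)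
    exact ⟨g, fun x hx => ContinuousMap.congr_fun hg ⟨x, hx⟩⟩
  set K : Set (EuclideanSpace ℝ (Fin n) × ℝ) :=
    {q | q.1 ∈ X ∧ 0 ≤ q.2 ∧ q.2 ≤ f q.1} with hK
  have hKalt : K = (Prod.fst ⁻¹' X) ∩
      ({q | 0 ≤ q.2} ∩ {q : EuclideanSpace ℝ (Fin n) × ℝ | q.2 ≤ F q.1}) := by
    ext q
    simp only [hK, Set.mem_setOf_eq, Set.mem_inter_iff, Set.mem_preimage]
    constructor
    · rintro ⟨h1, h2, h3⟩; exact ⟨h1, h2, by rw [hFf _ h1]; exact h3⟩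
    · rintro ⟨h1, h2, h3⟩; exact ⟨h1, h2, by rw [← hFf _ h1]; exact h3⟩
  have hKclosed : IsClosed K := by
    rw [hKalt]
    exact (hXc.preimage continuous_fst).inter
      ((isClosed_le continuous_const continuous_snd).inter
        (isClosed_le continuous_snd (F.continuous.comp continuous_fst)))
  -- K is compact
  obtain ⟨Mf, hMf⟩ := hX.exists_bound_of_continuousOn hf
  have hKcomp : IsCompact K := by
    refine (hX.prod (isCompact_Icc (a := (0:ℝ)) (b := Mf))).of_isClosed_subset hKclosed ?_
    rintro ⟨x, s⟩ ⟨h1, h2, h3⟩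
    exact ⟨h1, h2, h3.trans ((le_abs_self _).trans (by simpa using hMf x h1))⟩
  -- bound for τ on K
  obtain ⟨M₀, hM₀⟩ := hKcomp.exists_bound_of_continuousOn hτ
  set M : ℝ := max M₀ 0 with hMdef
  have hM0 : 0 ≤ M := le_max_right _ _
  have hM : ∀ q ∈ K, |τ q.1 q.2| ≤ M := by
    intro q hq
    have := hM₀ q hq
    rw [Real.norm_eq_abs] at this
    exact this.trans (le_max_left _ _)
  -- extend τ and truncate
  obtain ⟨T, hT⟩ : ∃ T : C(EuclideanSpace ℝ (Fin n) × ℝ, ℝ), ∀ q ∈ K, T q = τ q.1 q.2 := by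
    obtain ⟨g, hg⟩ :=
      ContinuousMap.exists_restrict_eq (Y := ℝ) hKclosed (ContinuousMap.mk (K.restrict fun q => τ q.1 q.2) hτ.restrict)
    exact ⟨g, fun q hq => ContinuousMap.congr_fun hg ⟨q, hq⟩⟩
  set σ : EuclideanSpace ℝ (Fin n) → ℝ → ℝ :=
    fun x s => max (-M) (min M (T (x, s))) with hσdef
  have hσcont : Continuous (fun q : EuclideanSpace ℝ (Fin n) × ℝ => σ q.1 q.2) := by
    fun_prop
  have hσbound : ∀ x s, |σ x s| ≤ M := by
    intro x s
    rw [abs_le]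
    exact ⟨le_max_left _ _, max_le (by linarith) (min_le_left _ _)⟩
  have hστ : ∀ q ∈ K, σ q.1 q.2 = τ q.1 q.2 := by
    intro q hq
    have h1 := hM q hq
    rw [abs_le] at h1
    rw [hσdef]; simp only [hT q hq]
    rw [min_eq_right h1.2, max_eq_right h1.1]
  -- the surrogate function V
  set g : EuclideanSpace ℝ (Fin n) → ℝ → ℝ :=
    fun x t => ∫ s in (0:ℝ)..(min t (F x)), σ x s with hgdef
  set V : ℝ → ℝ := fun t => ∫ x in X, g x t with hVdef
  have hgcont : ∀ t : ℝ, Continuous (fun x => g x t) := by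
    intro t
    exact intervalIntegral.continuous_parametric_intervalIntegral_of_continuous
      (f := fun x s => σ x s) hσcont (continuous_const.min F.continuous)
  -- W and V agree near t₀
  have hWV : W =ᶠ[nhds t₀] V := by
    filter_upwards [Ioi_mem_nhds ht₀] with t ht
    rw [hW t, hVdef]
    apply setIntegral_congr_fun hXc.measurableSet
    intro x hx
    simp only [hgdef, hFf x hx]
    apply intervalIntegral.integral_congr
    intro s hs
    rw [Set.uIcc_of_le (le_min (le_of_lt ht) (hf0 x hx))] at hs
    exact (hστ (x, s) ⟨hx, hs.1, hs.2.trans (min_le_right _ _)⟩).symm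
  -- integrability of g(·, t) on X
  have hgint : ∀ t : ℝ, IntegrableOn (fun x => g x t) X := fun t =>
    (hgcont t).continuousOn.integrableOn_compact hX
  -- the difference quotient
  set Φ : ℝ → EuclideanSpace ℝ (Fin n) → ℝ :=
    fun t x => (g x t - g x t₀) / (t - t₀) with hΦdef
  have hσxc : ∀ x : EuclideanSpace ℝ (Fin n), Continuous (σ x) := by
    intro x
    exact hσcont.comp (continuous_const.prodMk continuous_id)
  have hslope : ∀ t : ℝ, slope V t₀ t = ∫ x in X, Φ t x := by
    intro t
    rw [slope_def_field, hVdef, hΦdef]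
    simp only
    rw [← integral_sub (hgint t) (hgint t₀), ← integral_div]
  -- the uniform bound
  have hbound : ∀ (t : ℝ) (x : EuclideanSpace ℝ (Fin n)), |Φ t x| ≤ M := by
    intro t x
    rcases eq_or_ne t t₀ with rfl | ht
    · simp [hΦdef, hM0]
    have hsub : g x t - g x t₀ = ∫ s in (min t₀ (F x))..(min t (F x)), σ x s := by
      simp only [hgdef]
      exact intervalIntegral.integral_interval_sub_left
        ((hσxc x).intervalIntegrable (μ := volume) _ _) ((hσxc x).intervalIntegrable (μ := volume) _ _)
    have h1 : |g x t - g x t₀| ≤ M * |min t (F x) - min t₀ (F x)| := by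
      rw [hsub]
      have := intervalIntegral.norm_integral_le_of_norm_le_const
        (C := M) (a := min t₀ (F x)) (b := min t (F x)) (f := σ x)
        (fun s _ => by rw [Real.norm_eq_abs]; exact hσbound x s)
      rwa [Real.norm_eq_abs] at this
    have h2 : |min t (F x) - min t₀ (F x)| ≤ |t - t₀| := abs_min_sub_min t t₀ (F x)
    have h3 : (0:ℝ) < |t - t₀| := abs_pos.2 (sub_ne_zero.2 ht)
    rw [hΦdef]
    simp only [abs_div]
    rw [div_le_iff₀ h3]
    calc |g x t - g x t₀| ≤ M * |min t (F x) - min t₀ (F x)| := h1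
      _ ≤ M * |t - t₀| := by nlinarith
  -- pointwise limits
  set AR : EuclideanSpace ℝ (Fin n) → ℝ := fun x => if t₀ < F x then σ x t₀ else 0 with hARdef
  set AL : EuclideanSpace ℝ (Fin n) → ℝ := fun x => if t₀ ≤ F x then σ x t₀ else 0 with hALdef
  have hFTC : ∀ x : EuclideanSpace ℝ (Fin n),
      Tendsto (slope (fun u => ∫ s in (0:ℝ)..u, σ x s) t₀) (𝓝[≠] t₀) (𝓝 (σ x t₀)) :=
    fun x => hasDerivAt_iff_tendsto_slope.1 ((hσxc x).integral_hasStrictDerivAt 0 t₀).hasDerivAt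
  have hIoisub : Set.Ioi t₀ ⊆ {t₀}ᶜ := fun t ht => ne_of_gt ht
  have hIiosub : Set.Iio t₀ ⊆ {t₀}ᶜ := fun t ht => ne_of_lt ht
  have hptR : ∀ x : EuclideanSpace ℝ (Fin n),
      Tendsto (fun t => Φ t x) (𝓝[>] t₀) (𝓝 (AR x)) := by
    intro x
    rcases lt_or_ge t₀ (F x) with hx | hx
    · have hD := (hFTC x).mono_left (nhdsWithin_mono _ hIoisub)
      rw [hARdef]; simp only [if_pos hx]
      refine Tendsto.congr' ?_ hD
      filter_upwards [Ioo_mem_nhdsGT_of_mem (Set.mem_Ico.2 ⟨le_refl t₀, hx⟩)] with t ht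
      rw [slope_def_field, hΦdef]
      simp only [hgdef]
      rw [min_eq_left ht.2.le, min_eq_left hx.le]
    · rw [hARdef]; simp only [if_neg (not_lt.2 hx)]
      refine Tendsto.congr' ?_ tendsto_const_nhds
      filter_upwards [self_mem_nhdsWithin] with t ht
      rw [hΦdef]
      simp only [hgdef]
      rw [min_eq_right (hx.trans (le_of_lt ht)), min_eq_right hx, sub_self, zero_div]
  have hptL : ∀ x : EuclideanSpace ℝ (Fin n),
      Tendsto (fun t => Φ t x) (𝓝[<] t₀) (𝓝 (AL x)) := by
    intro x
    rcases le_or_gt t₀ (F x) with hx | hx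
    · have hD := (hFTC x).mono_left (nhdsWithin_mono _ hIiosub)
      rw [hALdef]; simp only [if_pos hx]
      refine Tendsto.congr' ?_ hD
      filter_upwards [self_mem_nhdsWithin] with t ht
      rw [slope_def_field, hΦdef]
      simp only [hgdef]
      rw [min_eq_left ((le_of_lt ht).trans hx), min_eq_left hx]
    · rw [hALdef]; simp only [if_neg (not_le.2 hx)]
      refine Tendsto.congr' ?_ tendsto_const_nhds
      filter_upwards [Ioo_mem_nhdsLT_of_mem (Set.mem_Ioc.2 ⟨hx, le_refl t₀⟩)] with t ht
      rw [hΦdef]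
      simp only [hgdef]
      rw [min_eq_right ht.1.le, min_eq_right hx.le, sub_self, zero_div]
  -- dominated convergence
  have hΦmeas : ∀ t : ℝ, AEStronglyMeasurable (Φ t) (volume.restrict X) := by
    intro t
    exact (((hgcont t).sub (hgcont t₀)).div_const _).aestronglyMeasurable
  have hMint : Integrable (fun _ : EuclideanSpace ℝ (Fin n) => M) (volume.restrict X) := by
    rw [integrable_const_iff]
    right
    refine ⟨?_⟩
    rw [Measure.restrict_apply_univ]
    exact hX.measure_lt_top
  have hDCT : ∀ (l : Filter ℝ) (L : EuclideanSpace ℝ (Fin n) → ℝ), l.IsCountablyGenerated →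
      (∀ x : EuclideanSpace ℝ (Fin n), Tendsto (fun t => Φ t x) l (𝓝 (L x))) →
      Tendsto (fun t => ∫ x in X, Φ t x) l (𝓝 (∫ x in X, L x)) := by
    intro l L hl hlim
    exact tendsto_integral_filter_of_dominated_convergence (fun _ => M)
      (Eventually.of_forall hΦmeas)
      (Eventually.of_forall fun t => ae_of_all _ fun x => by
        rw [Real.norm_eq_abs]; exact hbound t x)
      hMint (ae_of_all _ hlim)
  have hAR : Tendsto (slope V t₀) (𝓝[>] t₀) (𝓝 (∫ x in X, AR x)) := by
    refine Tendsto.congr (fun t => (hslope t).symm) (hDCT _ _ inferInstance hptR)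
  have hAL : Tendsto (slope V t₀) (𝓝[<] t₀) (𝓝 (∫ x in X, AL x)) := by
    refine Tendsto.congr (fun t => (hslope t).symm) (hDCT _ _ inferInstance hptL)
  -- the equivalence for V
  have hViff : DifferentiableAt ℝ V t₀ ↔ (∫ x in X, AR x) = ∫ x in X, AL x := by
    constructor
    · intro h
      have hD := hasDerivAt_iff_tendsto_slope.1 h.hasDerivAt
      have h1 : Tendsto (slope V t₀) (𝓝[>] t₀) (𝓝 (deriv V t₀)) :=
        hD.mono_left (nhdsWithin_mono _ hIoisub)
      have h2 : Tendsto (slope V t₀) (𝓝[<] t₀) (𝓝 (deriv V t₀)) :=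
        hD.mono_left (nhdsWithin_mono _ hIiosub)
      rw [tendsto_nhds_unique hAR h1, tendsto_nhds_unique hAL h2]
    · intro h
      have : HasDerivAt V (∫ x in X, AL x) t₀ := by
        rw [hasDerivAt_iff_tendsto_slope, ← nhdsLT_sup_nhdsGT t₀, tendsto_sup]
        exact ⟨hAL, h ▸ hAR⟩
      exact this.differentiableAt
  -- identify the difference of the one-sided derivatives with the level-set integral
  have hlevel : (∫ x in {x ∈ X | f x = t₀}, τ x t₀) = (∫ x in X, AL x) - ∫ x in X, AR x := by
    have hmeasL : MeasurableSet {y : EuclideanSpace ℝ (Fin n) | F y = t₀} :=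
      (isClosed_eq F.continuous continuous_const).measurableSet
    have hσt₀ : Continuous (fun y : EuclideanSpace ℝ (Fin n) => σ y t₀) :=
      hσcont.comp (continuous_id.prodMk continuous_const)
    have hintR : IntegrableOn AR X := by
      have : AR = Set.indicator {y | t₀ < F y} (fun y => σ y t₀) := by
        funext y
        rw [hARdef, Set.indicator_apply]
        rfl
      rw [this]
      exact (hσt₀.continuousOn.integrableOn_compact hX).indicator
        (isOpen_lt continuous_const F.continuous).measurableSet
    have hintL : IntegrableOn AL X := by
      have : AL = Set.indicator {y | t₀ ≤ F y} (fun y => σ y t₀) := by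
        funext y
        rw [hALdef, Set.indicator_apply]
        rfl
      rw [this]
      exact (hσt₀.continuousOn.integrableOn_compact hX).indicator
        (isClosed_le continuous_const F.continuous).measurableSet
    rw [← integral_sub hintL hintR]
    have hdiff : ∀ y : EuclideanSpace ℝ (Fin n),
        AL y - AR y = Set.indicator {y | F y = t₀} (fun y => σ y t₀) y := by
      intro y
      rw [hALdef, hARdef, Set.indicator_apply]
      by_cases h1 : F y = t₀
      · simp [h1, le_refl, lt_irrefl]
      · rcases lt_or_gt_of_ne h1 with h2 | h2
        · simp [Set.mem_setOf_eq, h1, not_le.2 h2, (not_lt.2 h2.le)]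
        · simp [Set.mem_setOf_eq, h1, h2.le, h2]
    rw [integral_congr_ae (ae_of_all _ hdiff)]
    rw [setIntegral_indicator hmeasL]
    have hseteq : X ∩ {y | F y = t₀} = {x ∈ X | f x = t₀} := by
      ext y
      simp only [Set.mem_inter_iff, Set.mem_setOf_eq]
      constructor
      · rintro ⟨h1, h2⟩; exact ⟨h1, by rw [← hFf y h1]; exact h2⟩
      · rintro ⟨h1, h2⟩; exact ⟨h1, by rw [hFf y h1]; exact h2⟩
    rw [hseteq]
    apply setIntegral_congr_fun
    · rw [← hseteq]
      exact (hXc.measurableSet).inter hmeasL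
    · intro y hy
      exact (hστ (y, t₀) ⟨hy.1, ht₀.le, by rw [hy.2]⟩).symm
  rw [hWV.differentiableAt_iff, hViff, hlevel, sub_eq_zero, eq_comm]
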